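/- Every m-isometry on ℝⁿ (m odd, finite dimensional) preserves n-dimensional volume, i.e., has determinant ±1. -/

import Mathlib

open scoped BigOperators

/-- `T` is an `m`-isometry on a real Hilbert space. -/
def IsMIsometryR {H : Type*} [NormedAddCommGroup H] [InnerProductSpace ℝ H]
    (m : ℕ) (T : H →L[ℝ] H) : Prop :=
  ∀ x : H, ∑ k ∈ Finset.range (m + 1),
    (-1 : ℝ) ^ (m - k) * (m.choose k) * ‖(T ^ k) x‖ ^ 2 = 0

/-- Every eigenvalue of the complexification of a matrix satisfying the
`m`-isometry identity has modulus one. -/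
lemma normSq_eig_eq_one (n m : ℕ) (hm : Odd m) (M : Matrix (Fin n) (Fin n) ℝ)
    (μ : ℂ) (v : Fin n → ℂ) (hv : v ≠ 0)
    (heig : (Complex.ofRealHom.mapMatrix M).mulVec v = μ • v)
    (hsum : ∀ x : Fin n → ℝ, ∑ k ∈ Finset.range (m + 1),
      (-1 : ℝ) ^ (m - k) * (m.choose k) * (∑ i, ((M ^ k).mulVec x i) ^ 2) = 0) :
    Complex.normSq μ = 1 := by
  set Mc := Complex.ofRealHom.mapMatrix M with hMc
  have hstep1 : ∀ k : ℕ, (Mc ^ k).mulVec v = (μ ^ k) • v := by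
    intro k
    induction k with
    | zero => simp [Matrix.one_mulVec]
    | succ k ih =>
      rw [pow_succ', ← Matrix.mulVec_mulVec, ih, Matrix.mulVec_smul, heig,
        smul_smul, ← pow_succ]
  set x : Fin n → ℝ := fun i => (v i).re with hx
  set y : Fin n → ℝ := fun i => (v i).im with hy
  set S : ℝ := ∑ i, Complex.normSq (v i) with hS
  have hre : ∀ (A : Matrix (Fin n) (Fin n) ℝ) (i : Fin n),
      ((Complex.ofRealHom.mapMatrix A).mulVec v i).re = A.mulVec x i ∧
      ((Complex.ofRealHom.mapMatrix A).mulVec v i).im = A.mulVec y i := by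
    intro A i
    constructor <;>
    simp [Matrix.mulVec, dotProduct, Complex.re_sum, Complex.im_sum,
      Complex.mul_re, Complex.mul_im, RingHom.mapMatrix_apply, hx, hy]
  have hkey : ∀ k : ℕ, ∑ i, ((M ^ k).mulVec x i) ^ 2 + ∑ i, ((M ^ k).mulVec y i) ^ 2
      = Complex.normSq μ ^ k * S := by
    intro k
    have h1 : (Mc ^ k) = Complex.ofRealHom.mapMatrix (M ^ k) := by
      rw [hMc, map_pow]
    have h2 : ∀ i, Complex.normSq ((Mc ^ k).mulVec v i)
        = ((M ^ k).mulVec x i) ^ 2 + ((M ^ k).mulVec y i) ^ 2 := by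
      intro i
      rw [Complex.normSq_apply, h1, (hre (M ^ k) i).1, (hre (M ^ k) i).2]
      ring
    have h3 : ∀ i, Complex.normSq ((Mc ^ k).mulVec v i)
        = Complex.normSq μ ^ k * Complex.normSq (v i) := by
      intro i
      rw [hstep1 k]
      simp [Complex.normSq_mul, map_pow]
    calc ∑ i, ((M ^ k).mulVec x i) ^ 2 + ∑ i, ((M ^ k).mulVec y i) ^ 2
        = ∑ i, Complex.normSq ((Mc ^ k).mulVec v i) := by
          rw [← Finset.sum_add_distrib]; exact (Finset.sum_congr rfl fun i _ => (h2 i).symm)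
      _ = ∑ i, Complex.normSq μ ^ k * Complex.normSq (v i) :=
          Finset.sum_congr rfl fun i _ => h3 i
      _ = Complex.normSq μ ^ k * S := by rw [← Finset.mul_sum]
  set r : ℝ := Complex.normSq μ with hr
  have hmain : (r - 1) ^ m * S = 0 := by
    have h4 : ∑ k ∈ Finset.range (m + 1),
        (-1 : ℝ) ^ (m - k) * (m.choose k) * (r ^ k * S) = 0 := by
      calc ∑ k ∈ Finset.range (m + 1), (-1 : ℝ) ^ (m - k) * (m.choose k) * (r ^ k * S)
          = ∑ k ∈ Finset.range (m + 1), ((-1 : ℝ) ^ (m - k) * (m.choose k) *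
              (∑ i, ((M ^ k).mulVec x i) ^ 2)
            + (-1 : ℝ) ^ (m - k) * (m.choose k) * (∑ i, ((M ^ k).mulVec y i) ^ 2)) := by
            refine Finset.sum_congr rfl fun k _ => ?_
            rw [← mul_add, hkey k]
        _ = 0 := by rw [Finset.sum_add_distrib, hsum x, hsum y, add_zero]
    have h5 : (r - 1) ^ m = ∑ k ∈ Finset.range (m + 1),
        (-1 : ℝ) ^ (m - k) * (m.choose k) * r ^ k := by
      rw [sub_pow]
      refine Finset.sum_congr rfl fun k hk => ?_
      have hk' : k ≤ m := Nat.lt_succ_iff.mp (Finset.mem_range.mp hk)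
      have : (-1 : ℝ) ^ (k + m) = (-1 : ℝ) ^ (m - k) := by
        rw [show k + m = (m - k) + 2 * k by omega, pow_add, pow_mul]
        simp
      rw [this]; ring
    rw [h5, Finset.sum_mul]
    rw [← h4]
    exact Finset.sum_congr rfl fun k _ => by ring
  have hS0 : 0 < S := by
    obtain ⟨i, hi⟩ := Function.ne_iff.mp hv
    have : 0 < Complex.normSq (v i) := Complex.normSq_pos.mpr hi
    exact lt_of_lt_of_le this (Finset.single_le_sum (fun j _ => Complex.normSq_nonneg _)
      (Finset.mem_univ i))
  have hm0 : m ≠ 0 := by rintro rfl; simp at hm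
  have h6 : (r - 1) ^ m = 0 := by
    rcases mul_eq_zero.mp hmain with h | h
    · exact h
    · exact absurd h (ne_of_gt hS0)
  have := pow_eq_zero_iff hm0 |>.mp h6
  linarith [sub_eq_zero.mp this]

lemma charpoly_eval_det (n : ℕ) (μ : ℂ) (M : Matrix (Fin n) (Fin n) ℂ) :
    M.charpoly.eval μ = (Matrix.scalar (Fin n) μ - M).det := by
  rw [Matrix.charpoly, eval_det, Matrix.matPolyEquiv_charmatrix]
  simp

theorem stmt12 (n m : ℕ) (hm : Odd m)
    (T : EuclideanSpace ℝ (Fin n) →L[ℝ] EuclideanSpace ℝ (Fin n))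
    (hT : IsMIsometryR m T) :
    LinearMap.det ((T : EuclideanSpace ℝ (Fin n) →L[ℝ] EuclideanSpace ℝ (Fin n)) :
      EuclideanSpace ℝ (Fin n) →ₗ[ℝ] EuclideanSpace ℝ (Fin n)) = 1 ∨
    LinearMap.det ((T : EuclideanSpace ℝ (Fin n) →L[ℝ] EuclideanSpace ℝ (Fin n)) :
      EuclideanSpace ℝ (Fin n) →ₗ[ℝ] EuclideanSpace ℝ (Fin n)) = -1 := by
  classical
  set M : Matrix (Fin n) (Fin n) ℝ :=
    LinearMap.toMatrix' ((WithLp.linearEquiv 2 ℝ (Fin n → ℝ)).toLinearMap ∘ₗ T.toLinearMap ∘ₗ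
      (WithLp.linearEquiv 2 ℝ (Fin n → ℝ)).symm.toLinearMap) with hMdef
  have h0 : ∀ y : EuclideanSpace ℝ (Fin n), T y = M.mulVec y := by
    intro y
    have h1 : Matrix.toLin' M y = T y := by
      rw [hMdef, Matrix.toLin'_toMatrix']; rfl
    rw [← h1, Matrix.toLin'_apply]
  have hpow : ∀ (k : ℕ) (y : EuclideanSpace ℝ (Fin n)), (T ^ k) y = (M ^ k).mulVec y := by
    intro k
    induction k with
    | zero => intro y; simp [Matrix.one_mulVec]
    | succ k ih =>
      intro y
      rw [pow_succ', pow_succ']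
      show T ((T ^ k) y) = (M * M ^ k).mulVec y
      rw [h0, ih, Matrix.mulVec_mulVec]
  have hnorm : ∀ z : EuclideanSpace ℝ (Fin n), ‖z‖ ^ 2 = ∑ i, z i ^ 2 := by
    intro z
    rw [EuclideanSpace.norm_eq, Real.sq_sqrt (by positivity)]
    simp [sq_abs]
  have hsum : ∀ x : Fin n → ℝ, ∑ k ∈ Finset.range (m + 1),
      (-1 : ℝ) ^ (m - k) * (m.choose k) * (∑ i, ((M ^ k).mulVec x i) ^ 2) = 0 := by
    intro x
    have := hT (WithLp.toLp 2 x)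
    rw [← this]
    refine Finset.sum_congr rfl fun k _ => ?_
    rw [hnorm ((T ^ k) (WithLp.toLp 2 x)), hpow k (WithLp.toLp 2 x), WithLp.ofLp_toLp]
  -- pass to ℂ
  set Mc := Complex.ofRealHom.mapMatrix M with hMc
  have hroots : ∀ μ ∈ Mc.charpoly.roots, Complex.normSq μ = 1 := by
    intro μ hμ
    have hiroot : Mc.charpoly.IsRoot μ := (Polynomial.mem_roots'.mp hμ).2
    have hdet0 : (Matrix.scalar (Fin n) μ - Mc).det = 0 := by
      rw [← charpoly_eval_det]; exact hiroot
    obtain ⟨v, hv, hveq⟩ := (Matrix.exists_mulVec_eq_zero_iff).mpr hdet0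
    have heig : Mc.mulVec v = μ • v := by
      have := hveq
      rw [Matrix.sub_mulVec] at this
      have h2 : (Matrix.scalar (Fin n) μ).mulVec v = μ • v := by
        funext i
        simp [Matrix.scalar, Matrix.mulVec_diagonal]
      rw [h2] at this
      linear_combination (norm := module) -this
    exact normSq_eig_eq_one n m hm M μ v hv heig hsum
  have hdetM : Complex.normSq ((M.det : ℝ) : ℂ) = 1 := by
    have h1 : (Mc).det = ((M.det : ℝ) : ℂ) := by
      rw [hMc, ← RingHom.map_det]; rfl
    have h2 : Mc.det = Mc.charpoly.roots.prod := Matrix.det_eq_prod_roots_charpoly (A := Mc)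
    rw [← h1, h2, map_multiset_prod Complex.normSq]
    refine Multiset.prod_eq_one ?_
    intro a ha
    obtain ⟨μ, hμ, rfl⟩ := Multiset.mem_map.mp ha
    exact hroots μ hμ
  have hdet : LinearMap.det (T.toLinearMap) = M.det := by
    rw [hMdef, LinearMap.det_toMatrix', LinearMap.det_conj]
  have hsq : M.det * M.det = 1 := by
    have := hdetM
    rwa [Complex.normSq_ofReal] at this
  rcases mul_self_eq_one_iff.mp hsq with h | h
  · left; rw [hdet]; exact h
  · right; rw [hdet]; exact h
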